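/- The 5-dimensional Lebesgue volume of the set {x ∈ S : x1+x2−x3−x4 ≥ 0, 2x1+2x2+x3+x4 ≥ 1, 2(x1+x2+x5) ≤ 1, 2(x1+x2+x3) ≤ 1} (a is the plurality winner and also the Condorcet loser) equals 1/12960; that is, the limiting probability of Borda's paradox for the plurality rule under IAC for 3 candidates is 3·120·(1/12960) = 1/36. -/

import Mathlib

open MeasureTheory Set
open scoped ENNReal

namespace BordaAux

/-- All the defining conditions of the region, with coordinates named. -/
def Cond (a b c d y : ℝ) : Prop :=
  0 ≤ a ∧ 0 ≤ b ∧ 0 ≤ c ∧ 0 ≤ d ∧ 0 ≤ y ∧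
  a + b + c + d + y ≤ 1 ∧ 0 ≤ a + b - c - d ∧ 1 ≤ 2*a + 2*b + c + d ∧
  2*(a + b + y) ≤ 1 ∧ 2*(a + b + c) ≤ 1

lemma measCond1 (a b c d : ℝ) : MeasurableSet {y : ℝ | Cond a b c d y} := by
  simp only [Cond, setOf_and]
  repeat' apply MeasurableSet.inter
  all_goals first
    | exact MeasurableSet.const _
    | · apply measurableSet_le <;> fun_prop

lemma measCond2 (a b c : ℝ) : MeasurableSet {g : Fin 2 → ℝ | Cond a b c (g 0) (g 1)} := by
  simp only [Cond, setOf_and]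
  repeat' apply MeasurableSet.inter
  all_goals first
    | exact MeasurableSet.const _
    | · apply measurableSet_le <;> fun_prop

lemma measCond3 (a b : ℝ) : MeasurableSet {g : Fin 3 → ℝ | Cond a b (g 0) (g 1) (g 2)} := by
  simp only [Cond, setOf_and]
  repeat' apply MeasurableSet.inter
  all_goals first
    | exact MeasurableSet.const _
    | · apply measurableSet_le <;> fun_prop

lemma measCond4 (a : ℝ) : MeasurableSet {g : Fin 4 → ℝ | Cond a (g 0) (g 1) (g 2) (g 3)} := by
  simp only [Cond, setOf_and]
  repeat' apply MeasurableSet.inter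
  all_goals first
    | exact MeasurableSet.const _
    | · apply measurableSet_le <;> fun_prop

lemma measCond5 : MeasurableSet {x : Fin 5 → ℝ | Cond (x 0) (x 1) (x 2) (x 3) (x 4)} := by
  simp only [Cond, setOf_and]
  repeat' apply MeasurableSet.inter
  all_goals first
    | exact MeasurableSet.const _
    | · apply measurableSet_le <;> fun_prop

lemma slice_volume {n : ℕ} (s : Set (Fin (n+1) → ℝ)) (hs : MeasurableSet s) :
    volume s = ∫⁻ a : ℝ, volume {g : Fin n → ℝ | Fin.cons a g ∈ s} := by
  set e := MeasurableEquiv.piFinSuccAbove (fun _ : Fin (n+1) => ℝ) 0 with he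
  have hmp := volume_preserving_piFinSuccAbove (fun _ : Fin (n+1) => ℝ) 0
  have h1 : volume (e.symm ⁻¹' s) = volume s :=
    (hmp.symm e).measure_preimage hs.nullMeasurableSet
  rw [← h1, Measure.volume_eq_prod, Measure.prod_apply (e.symm.measurable hs)]
  congr 1
  ext a
  congr 1
  ext g
  have : e.symm (a, g) = Fin.cons a g := by
    simp only [he, MeasurableEquiv.piFinSuccAbove, MeasurableEquiv.symm_mk,
      MeasurableEquiv.coe_mk, Equiv.symm_symm, Fin.insertNthEquiv_zero, Fin.consEquiv,
      Equiv.coe_fn_mk]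
  simp [this]

lemma base_volume (P : ℝ → Prop) (hP : MeasurableSet {y | P y}) :
    volume {g : Fin 1 → ℝ | P (g 0)} = volume {y : ℝ | P y} := by
  have hmp := volume_preserving_funUnique (Fin 1) ℝ
  have h : {g : Fin 1 → ℝ | P (g 0)} = (MeasurableEquiv.funUnique (Fin 1) ℝ) ⁻¹' {y | P y} := by
    ext g
    simp [MeasurableEquiv.funUnique, Equiv.funUnique]
  rw [h]
  exact hmp.measure_preimage hP.nullMeasurableSet

lemma vol1_pos (a b c d : ℝ)
    (h1 : 0 ≤ a) (h2 : 0 ≤ b) (h3 : 0 ≤ c) (h4 : 0 ≤ d) (h5 : c + d ≤ a + b)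
    (h6 : 1 ≤ 2*a + 2*b + c + d) (h7 : 2*(a + b + c) ≤ 1) :
    volume {y : ℝ | Cond a b c d y} = ENNReal.ofReal (1/2 - (a + b)) := by
  have hset : {y : ℝ | Cond a b c d y} = Icc 0 (1/2 - (a + b)) := by
    ext y
    simp only [Cond, mem_setOf_eq, mem_Icc]
    constructor
    · rintro ⟨_, _, _, _, hy, _, _, _, h9, _⟩
      exact ⟨hy, by linarith⟩
    · rintro ⟨hy0, hy1⟩
      exact ⟨h1, h2, h3, h4, hy0, by linarith, by linarith, h6, by linarith, h7⟩
  rw [hset, Real.volume_Icc]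
  norm_num

lemma vol1_zero (a b c d : ℝ)
    (h : ¬(0 ≤ a ∧ 0 ≤ b ∧ 0 ≤ c ∧ 0 ≤ d ∧ c + d ≤ a + b ∧
      1 ≤ 2*a + 2*b + c + d ∧ 2*(a + b + c) ≤ 1)) :
    volume {y : ℝ | Cond a b c d y} = 0 := by
  have hset : {y : ℝ | Cond a b c d y} = (∅ : Set ℝ) := by
    ext y
    simp only [Cond, mem_setOf_eq, mem_empty_iff_false, iff_false]
    rintro ⟨h1, h2, h3, h4, _, _, h7, h8, _, h10⟩
    exact h ⟨h1, h2, h3, h4, by linarith, h8, h10⟩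
  rw [hset, measure_empty]

lemma cons_mem2 (d : ℝ) (g : Fin 1 → ℝ) (a b c : ℝ) :
    (Fin.cons d g ∈ {g : Fin 2 → ℝ | Cond a b c (g 0) (g 1)}) ↔ Cond a b c d (g 0) := Iff.rfl

lemma vol2_pos (a b c : ℝ) (h1 : 0 ≤ a) (h2 : 0 ≤ b) (h3 : 0 ≤ c) (h4 : 2*(a + b + c) ≤ 1) :
    volume {g : Fin 2 → ℝ | Cond a b c (g 0) (g 1)} =
      ENNReal.ofReal (1/2 - (a + b)) * ENNReal.ofReal (3*(a + b) - 1) := by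
  rw [slice_volume _ (measCond2 a b c)]
  have hbase : ∀ d : ℝ, volume {g : Fin 1 → ℝ |
      Fin.cons d g ∈ {g : Fin 2 → ℝ | Cond a b c (g 0) (g 1)}} =
      volume {y : ℝ | Cond a b c d y} := by
    intro d
    exact base_volume (fun y => Cond a b c d y) (measCond1 a b c d)
  calc ∫⁻ d : ℝ, volume {g : Fin 1 → ℝ |
        Fin.cons d g ∈ {g : Fin 2 → ℝ | Cond a b c (g 0) (g 1)}}
      = ∫⁻ d : ℝ, Set.indicator (Icc (1 - 2*a - 2*b - c) (a + b - c))
          (fun _ => ENNReal.ofReal (1/2 - (a + b))) d := by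
        refine lintegral_congr fun d => ?_
        rw [hbase d]
        by_cases hd : d ∈ Icc (1 - 2*a - 2*b - c) (a + b - c)
        · rw [indicator_of_mem hd]
          exact vol1_pos a b c d h1 h2 h3 (by linarith [hd.1]) (by linarith [hd.2])
            (by linarith [hd.1]) h4
        · rw [indicator_of_notMem hd]
          refine vol1_zero a b c d fun hc => ?_
          exact hd ⟨by linarith [hc.2.2.2.2.2.1], by linarith [hc.2.2.2.2.1]⟩
    _ = ENNReal.ofReal (1/2 - (a + b)) * volume (Icc (1 - 2*a - 2*b - c) (a + b - c)) := by
        rw [lintegral_indicator_const measurableSet_Icc]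
    _ = ENNReal.ofReal (1/2 - (a + b)) * ENNReal.ofReal (3*(a + b) - 1) := by
        rw [Real.volume_Icc]
        congr 1
        ring_nf

lemma vol2_zero (a b c : ℝ) (h : ¬(0 ≤ a ∧ 0 ≤ b ∧ 0 ≤ c ∧ 2*(a + b + c) ≤ 1)) :
    volume {g : Fin 2 → ℝ | Cond a b c (g 0) (g 1)} = 0 := by
  have hset : {g : Fin 2 → ℝ | Cond a b c (g 0) (g 1)} = (∅ : Set (Fin 2 → ℝ)) := by
    ext g
    simp only [Cond, mem_setOf_eq, mem_empty_iff_false, iff_false]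
    rintro ⟨h1, h2, h3, _, _, _, _, _, _, h10⟩
    exact h ⟨h1, h2, h3, h10⟩
  rw [hset, measure_empty]

/-- the polynomial appearing after integrating out the last three coordinates -/
noncomputable def q : ℝ → ℝ := Set.indicator (Icc (1/3 : ℝ) (1/2))
  (fun s => (1/2 - s)^2 * (3*s - 1))

lemma q_eq (s : ℝ) :
    ENNReal.ofReal (1/2 - s) * ENNReal.ofReal (3*s - 1) * ENNReal.ofReal (1/2 - s)
      = ENNReal.ofReal (q s) := by
  by_cases hs : s ∈ Icc (1/3 : ℝ) (1/2)
  · rw [q, indicator_of_mem hs]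
    rw [← ENNReal.ofReal_mul (by linarith [hs.2]), ← ENNReal.ofReal_mul
      (mul_nonneg (by linarith [hs.2]) (by linarith [hs.1]))]
    congr 1
    ring
  · rw [q, indicator_of_notMem hs, ENNReal.ofReal_zero]
    rcases lt_or_ge s (1/3) with h | h
    · rw [ENNReal.ofReal_eq_zero.2 (by linarith : 3*s - 1 ≤ 0)]
      rw [mul_zero, zero_mul]
    · have h2 : (1/2 : ℝ) < s := by
        rcases lt_or_ge (1/2 : ℝ) s with h' | h'
        · exact h'
        · exact absurd ⟨h, h'⟩ hs
      rw [ENNReal.ofReal_eq_zero.2 (by linarith : 1/2 - s ≤ 0)]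
      rw [zero_mul, zero_mul]

lemma vol3_pos (a b : ℝ) (h1 : 0 ≤ a) (h2 : 0 ≤ b) :
    volume {g : Fin 3 → ℝ | Cond a b (g 0) (g 1) (g 2)} = ENNReal.ofReal (q (a + b)) := by
  rw [slice_volume _ (measCond3 a b)]
  calc ∫⁻ c : ℝ, volume {g : Fin 2 → ℝ |
        Fin.cons c g ∈ {g : Fin 3 → ℝ | Cond a b (g 0) (g 1) (g 2)}}
      = ∫⁻ c : ℝ, Set.indicator (Icc 0 (1/2 - (a + b)))
          (fun _ => ENNReal.ofReal (1/2 - (a + b)) * ENNReal.ofReal (3*(a + b) - 1)) c := by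
        refine lintegral_congr fun c => ?_
        have hmem : {g : Fin 2 → ℝ |
            Fin.cons c g ∈ {g : Fin 3 → ℝ | Cond a b (g 0) (g 1) (g 2)}} =
            {g : Fin 2 → ℝ | Cond a b c (g 0) (g 1)} := rfl
        rw [hmem]
        by_cases hc : c ∈ Icc (0 : ℝ) (1/2 - (a + b))
        · rw [indicator_of_mem hc]
          exact vol2_pos a b c h1 h2 hc.1 (by linarith [hc.2])
        · rw [indicator_of_notMem hc]
          refine vol2_zero a b c fun hcon => ?_
          exact hc ⟨hcon.2.2.1, by linarith [hcon.2.2.2]⟩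
    _ = ENNReal.ofReal (1/2 - (a + b)) * ENNReal.ofReal (3*(a + b) - 1) *
          volume (Icc (0 : ℝ) (1/2 - (a + b))) := by
        rw [lintegral_indicator_const measurableSet_Icc]
    _ = ENNReal.ofReal (q (a + b)) := by
        rw [Real.volume_Icc, ← q_eq (a + b)]
        norm_num

lemma vol3_zero (a b : ℝ) (h : ¬(0 ≤ a ∧ 0 ≤ b)) :
    volume {g : Fin 3 → ℝ | Cond a b (g 0) (g 1) (g 2)} = 0 := by
  have hset : {g : Fin 3 → ℝ | Cond a b (g 0) (g 1) (g 2)} = (∅ : Set (Fin 3 → ℝ)) := by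
    ext g
    simp only [Cond, mem_setOf_eq, mem_empty_iff_false, iff_false]
    rintro ⟨h1, h2, _⟩
    exact h ⟨h1, h2⟩
  rw [hset, measure_empty]

lemma vol4 (a : ℝ) :
    volume {g : Fin 4 → ℝ | Cond a (g 0) (g 1) (g 2) (g 3)} =
      ∫⁻ s : ℝ, Set.indicator (Icc 0 s) (fun _ => ENNReal.ofReal (q s)) a := by
  rw [slice_volume _ (measCond4 a)]
  have hmem : ∀ b : ℝ, {g : Fin 3 → ℝ |
      Fin.cons b g ∈ {g : Fin 4 → ℝ | Cond a (g 0) (g 1) (g 2) (g 3)}} =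
      {g : Fin 3 → ℝ | Cond a b (g 0) (g 1) (g 2)} := fun b => rfl
  by_cases ha : 0 ≤ a
  · calc ∫⁻ b : ℝ, volume {g : Fin 3 → ℝ |
          Fin.cons b g ∈ {g : Fin 4 → ℝ | Cond a (g 0) (g 1) (g 2) (g 3)}}
        = ∫⁻ b : ℝ, (fun s => Set.indicator (Ici a) (fun t => ENNReal.ofReal (q t)) s)
            (a + b) := by
          refine lintegral_congr fun b => ?_
          rw [hmem b]
          show volume _ = (Ici a).indicator (fun t => ENNReal.ofReal (q t)) (a + b)
          by_cases hb : 0 ≤ b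
          · rw [indicator_of_mem (by simpa using hb : a + b ∈ Ici a)]
            exact vol3_pos a b ha hb
          · rw [indicator_of_notMem (by simpa using hb : a + b ∉ Ici a)]
            exact vol3_zero a b fun hc => hb hc.2
      _ = ∫⁻ s : ℝ, Set.indicator (Ici a) (fun t => ENNReal.ofReal (q t)) s :=
          lintegral_add_left_eq_self _ a
      _ = ∫⁻ s : ℝ, Set.indicator (Icc 0 s) (fun _ => ENNReal.ofReal (q s)) a := by
          refine lintegral_congr fun s => ?_
          by_cases hs : a ≤ s
          · rw [indicator_of_mem (by simpa using hs : s ∈ Ici a),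
              indicator_of_mem (show a ∈ Icc 0 s from ⟨ha, hs⟩)]
          · rw [indicator_of_notMem (by simpa using hs : s ∉ Ici a),
              indicator_of_notMem (fun hc => hs hc.2)]
  · calc ∫⁻ b : ℝ, volume {g : Fin 3 → ℝ |
          Fin.cons b g ∈ {g : Fin 4 → ℝ | Cond a (g 0) (g 1) (g 2) (g 3)}}
        = ∫⁻ x : ℝ, (0 : ℝ≥0∞) := by
          refine lintegral_congr fun b => ?_
          rw [hmem b]
          exact vol3_zero a b fun hc => ha hc.1
      _ = 0 := lintegral_zero
      _ = ∫⁻ s : ℝ, Set.indicator (Icc 0 s) (fun _ => ENNReal.ofReal (q s)) a := by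
          rw [lintegral_congr fun s =>
            (indicator_of_notMem (fun hc : a ∈ Icc 0 s => ha hc.1) _)]
          rw [lintegral_zero]

lemma q_measurable : Measurable q :=
  Measurable.indicator (by fun_prop) measurableSet_Icc

lemma swap_meas : Measurable (fun p : ℝ × ℝ =>
    Set.indicator (Icc 0 p.2) (fun _ => ENNReal.ofReal (q p.2)) p.1) := by
  have hfun : (fun p : ℝ × ℝ => Set.indicator (Icc 0 p.2) (fun _ => ENNReal.ofReal (q p.2)) p.1)
      = Set.indicator {p : ℝ × ℝ | 0 ≤ p.1 ∧ p.1 ≤ p.2}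
        (fun p => ENNReal.ofReal (q p.2)) := by
    funext p
    simp only [Set.indicator_apply, mem_Icc, mem_setOf_eq]
  rw [hfun]
  refine Measurable.indicator ?_ ?_
  · exact ENNReal.measurable_ofReal.comp (q_measurable.comp measurable_snd)
  · have : {p : ℝ × ℝ | 0 ≤ p.1 ∧ p.1 ≤ p.2} =
        {p : ℝ × ℝ | 0 ≤ p.1} ∩ {p : ℝ × ℝ | p.1 ≤ p.2} := by
      ext p; simp [mem_setOf_eq, mem_inter_iff]
    rw [this]
    exact (measurableSet_le measurable_const measurable_fst).inter
      (measurableSet_le measurable_fst measurable_snd)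

lemma interval_value :
    ∫ s in (1/3 : ℝ)..(1/2 : ℝ), (1/2 - s)^2 * (3*s - 1) * s = 1/12960 := by
  have hd : ∀ s ∈ uIcc (1/3 : ℝ) (1/2),
      HasDerivAt (fun t : ℝ => 3/5*t^5 - t^4 + (7/12*t^3 - 1/8*t^2))
        ((1/2 - s)^2 * (3*s - 1) * s) s := by
    intro s _
    have h := (((hasDerivAt_pow 5 s).const_mul (3/5 : ℝ)).sub (hasDerivAt_pow 4 s)).add
      (((hasDerivAt_pow 3 s).const_mul (7/12 : ℝ)).sub ((hasDerivAt_pow 2 s).const_mul (1/8 : ℝ)))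
    refine h.congr_deriv ?_
    push_cast
    norm_num
    ring
  rw [intervalIntegral.integral_eq_sub_of_hasDerivAt hd
    (by apply Continuous.intervalIntegrable; fun_prop)]
  norm_num

lemma key : volume {x : Fin 5 → ℝ | Cond (x 0) (x 1) (x 2) (x 3) (x 4)} = 1/12960 := by
  rw [slice_volume _ measCond5]
  have hpoly_nn : ∀ s ∈ Icc (1/3 : ℝ) (1/2), (0:ℝ) ≤ (1/2 - s)^2 * (3*s - 1) * s :=
    fun s hs => mul_nonneg (mul_nonneg (sq_nonneg _) (by linarith [hs.1])) (by linarith [hs.1])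
  calc ∫⁻ a : ℝ, volume {g : Fin 4 → ℝ |
        Fin.cons a g ∈ {x : Fin 5 → ℝ | Cond (x 0) (x 1) (x 2) (x 3) (x 4)}}
      = ∫⁻ a : ℝ, ∫⁻ s : ℝ, Set.indicator (Icc 0 s) (fun _ => ENNReal.ofReal (q s)) a :=
        lintegral_congr fun a => vol4 a
    _ = ∫⁻ s : ℝ, ∫⁻ a : ℝ, Set.indicator (Icc 0 s) (fun _ => ENNReal.ofReal (q s)) a :=
        lintegral_lintegral_swap swap_meas.aemeasurable
    _ = ∫⁻ s : ℝ, ENNReal.ofReal (q s) * volume (Icc (0:ℝ) s) :=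
        lintegral_congr fun s => lintegral_indicator_const measurableSet_Icc _
    _ = ∫⁻ s : ℝ, Set.indicator (Icc (1/3 : ℝ) (1/2))
          (fun s => ENNReal.ofReal ((1/2 - s)^2 * (3*s - 1) * s)) s := by
        refine lintegral_congr fun s => ?_
        rw [Real.volume_Icc]
        by_cases hs : s ∈ Icc (1/3 : ℝ) (1/2)
        · rw [indicator_of_mem hs, q, indicator_of_mem hs,
            ← ENNReal.ofReal_mul (mul_nonneg (sq_nonneg _) (by linarith [hs.1]))]
          congr 1
          ring
        · rw [indicator_of_notMem hs, q, indicator_of_notMem hs,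
            ENNReal.ofReal_zero, zero_mul]
    _ = ∫⁻ s in Icc (1/3 : ℝ) (1/2), ENNReal.ofReal ((1/2 - s)^2 * (3*s - 1) * s) :=
        lintegral_indicator measurableSet_Icc _
    _ = ENNReal.ofReal (∫ s in Icc (1/3 : ℝ) (1/2), (1/2 - s)^2 * (3*s - 1) * s) := by
        refine (ofReal_integral_eq_lintegral_ofReal ?_ ?_).symm
        · exact (Continuous.integrableOn_Icc (by fun_prop))
        · exact (ae_restrict_iff' measurableSet_Icc).2 (ae_of_all _ hpoly_nn)
    _ = ENNReal.ofReal (1/12960 : ℝ) := by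
        rw [integral_Icc_eq_integral_Ioc,
          ← intervalIntegral.integral_of_le (by norm_num : (1/3 : ℝ) ≤ 1/2), interval_value]
    _ = 1/12960 := by
        rw [ENNReal.ofReal_div_of_pos (by norm_num), ENNReal.ofReal_one, ENNReal.ofReal_ofNat]

end BordaAux

/-- The 5-dimensional Lebesgue volume of the set of voting situations in which
`a` is the plurality winner and also the Condorcet loser equals `1/12960`;
that is, the limiting probability of Borda's paradox for the plurality rule
under IAC for 3 candidates is `3·120·(1/12960) = 1/36`. -/
theorem borda_paradox_plurality :
    volume {x : Fin 5 → ℝ |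
      (∀ i, 0 ≤ x i) ∧ x 0 + x 1 + x 2 + x 3 + x 4 ≤ 1 ∧
      0 ≤ x 0 + x 1 - x 2 - x 3 ∧ 1 ≤ 2 * x 0 + 2 * x 1 + x 2 + x 3 ∧
      2 * (x 0 + x 1 + x 4) ≤ 1 ∧ 2 * (x 0 + x 1 + x 2) ≤ 1} = 1 / 12960 ∧
    3 * 120 * volume {x : Fin 5 → ℝ |
      (∀ i, 0 ≤ x i) ∧ x 0 + x 1 + x 2 + x 3 + x 4 ≤ 1 ∧
      0 ≤ x 0 + x 1 - x 2 - x 3 ∧ 1 ≤ 2 * x 0 + 2 * x 1 + x 2 + x 3 ∧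
      2 * (x 0 + x 1 + x 4) ≤ 1 ∧ 2 * (x 0 + x 1 + x 2) ≤ 1} = 1 / 36 := by
  have hset : {x : Fin 5 → ℝ |
      (∀ i, 0 ≤ x i) ∧ x 0 + x 1 + x 2 + x 3 + x 4 ≤ 1 ∧
      0 ≤ x 0 + x 1 - x 2 - x 3 ∧ 1 ≤ 2 * x 0 + 2 * x 1 + x 2 + x 3 ∧
      2 * (x 0 + x 1 + x 4) ≤ 1 ∧ 2 * (x 0 + x 1 + x 2) ≤ 1} =
      {x : Fin 5 → ℝ | BordaAux.Cond (x 0) (x 1) (x 2) (x 3) (x 4)} := by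
    ext x
    simp only [mem_setOf_eq, BordaAux.Cond]
    constructor
    · rintro ⟨hpos, h1, h2, h3, h4, h5⟩
      exact ⟨hpos 0, hpos 1, hpos 2, hpos 3, hpos 4, h1, h2, h3, h4, h5⟩
    · rintro ⟨p0, p1, p2, p3, p4, h1, h2, h3, h4, h5⟩
      exact ⟨fun i => by fin_cases i <;> assumption, h1, h2, h3, h4, h5⟩
  rw [hset, BordaAux.key]
  refine ⟨rfl, ?_⟩
  rw [div_eq_mul_inv, div_eq_mul_inv, one_mul, one_mul,
    show (3 : ℝ≥0∞) * 120 = 360 from by norm_num,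
    show (12960 : ℝ≥0∞) = 360 * 36 from by norm_num,
    ENNReal.mul_inv (Or.inl (by norm_num)) (Or.inl (by norm_num)), ← mul_assoc,
    ENNReal.mul_inv_cancel (by norm_num) (by norm_num), one_mul]
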